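/- Let x₁, …, xₙ be points in the Euclidean plane ℝ² such that for all 1 ≤ i < j < k ≤ n the orientation determinant det(x_j − x_i, x_k − x_i) is strictly positive (i.e., the points are in strictly convex position, numbered counterclockwise along the boundary of their convex hull). Then the Euclidean distance matrix C with entries c_{ij} = ‖x_i − x_j‖ is a symmetric Kalmanson matrix. -/

import Mathlib

/-- Kalmanson conditions for a symmetric matrix indexed by `Fin n`. -/
def IsKalmanson {n : ℕ} (C : Fin n → Fin n → ℝ) : Prop :=
  ∀ i j k l : Fin n, i < j → j < k → k < l →
    C i j + C k l ≤ C i k + C j l ∧ C i l + C j k ≤ C i k + C j l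

lemma quad_ineq (a b c d : EuclideanSpace ℝ (Fin 2))
    (h1 : 0 < (b-a) 0 * (c-a) 1 - (b-a) 1 * (c-a) 0)
    (h2 : 0 < (b-a) 0 * (d-a) 1 - (b-a) 1 * (d-a) 0)
    (h3 : 0 < (c-a) 0 * (d-a) 1 - (c-a) 1 * (d-a) 0)
    (h4 : 0 < (c-b) 0 * (d-b) 1 - (c-b) 1 * (d-b) 0) :
    ‖a-b‖ + ‖c-d‖ ≤ ‖a-c‖ + ‖b-d‖ ∧ ‖a-d‖ + ‖b-c‖ ≤ ‖a-c‖ + ‖b-d‖ := by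
  simp only [PiLp.sub_apply] at h1 h2 h3 h4
  set D1 : ℝ := (b 0 - a 0) * (c 1 - a 1) - (b 1 - a 1) * (c 0 - a 0) with hD1
  set D2 : ℝ := (b 0 - a 0) * (d 1 - a 1) - (b 1 - a 1) * (d 0 - a 0) with hD2
  set D3 : ℝ := (c 0 - a 0) * (d 1 - a 1) - (c 1 - a 1) * (d 0 - a 0) with hD3
  set D4 : ℝ := (c 0 - b 0) * (d 1 - b 1) - (c 1 - b 1) * (d 0 - b 0) with hD4
  have hD0 : 0 < D1 + D3 := by linarith
  have hsum : D2 + D4 = D1 + D3 := by rw [hD1, hD2, hD3, hD4]; ring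
  set t : ℝ := D2 / (D1 + D3) with ht
  set s : ℝ := D1 / (D1 + D3) with hs
  have ht0 : 0 ≤ t := le_of_lt (div_pos h2 hD0)
  have ht1 : t ≤ 1 := by rw [ht, div_le_one hD0]; linarith
  have hs0 : 0 ≤ s := le_of_lt (div_pos h1 hD0)
  have hs1 : s ≤ 1 := by rw [hs, div_le_one hD0]; linarith
  set p : EuclideanSpace ℝ (Fin 2) := a + t • (c - a) with hp
  have hpd : p = b + s • (d - b) := by
    rw [hp]
    ext m
    fin_cases m <;>
    · simp only [PiLp.add_apply, PiLp.smul_apply, PiLp.sub_apply, smul_eq_mul, ht, hs, Fin.zero_eta, Fin.mk_one]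
      field_simp
      rw [hD1, hD2, hD3]; ring
  have nsmul : ∀ (r : ℝ) (v : EuclideanSpace ℝ (Fin 2)), 0 ≤ r → ‖r • v‖ = r * ‖v‖ := by
    intro r v hr
    rw [norm_smul, Real.norm_eq_abs, abs_of_nonneg hr]
  have hap : ‖a - p‖ = t * ‖a - c‖ := by
    have : a - p = t • (a - c) := by rw [hp]; module
    rw [this, nsmul t _ ht0]
  have hpc : ‖p - c‖ = (1 - t) * ‖a - c‖ := by
    have : p - c = (1 - t) • (a - c) := by rw [hp]; module
    rw [this, nsmul _ _ (by linarith)]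
  have hbp : ‖b - p‖ = s * ‖b - d‖ := by
    have : b - p = s • (b - d) := by rw [hpd]; module
    rw [this, nsmul _ _ hs0]
  have hpd' : ‖p - d‖ = (1 - s) * ‖b - d‖ := by
    have : p - d = (1 - s) • (b - d) := by rw [hpd]; module
    rw [this, nsmul _ _ (by linarith)]
  have tri : ∀ u v : EuclideanSpace ℝ (Fin 2), ‖u - v‖ ≤ ‖u - p‖ + ‖p - v‖ := by
    intro u v
    calc ‖u - v‖ = ‖(u - p) + (p - v)‖ := by rw [sub_add_sub_cancel]
    _ ≤ ‖u - p‖ + ‖p - v‖ := norm_add_le _ _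
  have rev : ∀ u v : EuclideanSpace ℝ (Fin 2), ‖u - v‖ = ‖v - u‖ := fun u v => norm_sub_rev u v
  constructor
  · have e1 := tri a b
    have e2 := tri c d
    rw [hap, rev p b, hbp] at e1
    rw [rev c p, hpc, hpd'] at e2
    nlinarith [norm_nonneg (a - c), norm_nonneg (b - d)]
  · have e1 := tri a d
    have e2 := tri b c
    rw [hap, hpd'] at e1
    rw [hbp, hpc] at e2
    nlinarith [norm_nonneg (a - c), norm_nonneg (b - d)]

theorem convex_position_gives_kalmanson
    {n : ℕ} (x : Fin n → EuclideanSpace ℝ (Fin 2))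
    (hconv : ∀ i j k : Fin n, i < j → j < k →
      0 < (x j - x i) 0 * (x k - x i) 1 - (x j - x i) 1 * (x k - x i) 0) :
    (∀ i j : Fin n, ‖x i - x j‖ = ‖x j - x i‖) ∧
    IsKalmanson (fun i j : Fin n => ‖x i - x j‖) := by
  refine ⟨fun i j => norm_sub_rev _ _, ?_⟩
  intro i j k l hij hjk hkl
  exact quad_ineq (x i) (x j) (x k) (x l)
    (hconv i j k hij hjk) (hconv i j l hij (hjk.trans hkl))
    (hconv i k l (hij.trans hjk) hkl) (hconv j k l hjk hkl)
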